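/- Let D be a triangulated category admitting a bounded t-structure whose heart is a length category with finitely many isomorphism classes of simple objects. Then any two bounded t-structures on D are width-bounded with respect to each other. -/

import Mathlib

open CategoryTheory CategoryTheory.Limits CategoryTheory.Pretriangulated
open CategoryTheory.Triangulated

variable {C : Type*} [Category C] [Preadditive C] [HasZeroObject C] [HasShift C ℤ]
  [∀ n : ℤ, (shiftFunctor C n).Additive] [Pretriangulated C]

/-- A t-structure is bounded if every object lies in `D^{≥ m} ∩ D^{≤ n}` for some `m, n`. -/
def TBounded (t : TStructure C) : Prop :=
  ∀ X : C, ∃ m n : ℤ, t.ge m X ∧ t.le n X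

/-- The heart of a t-structure, as a predicate on objects. -/
def HeartSet (t : TStructure C) (X : C) : Prop :=
  t.le 0 X ∧ t.ge 0 X

/-- `t'` is width-bounded with respect to `t`: `D^{≤ m} ⊆ D'^{≤ 0} ⊆ D^{≤ n}`. -/
def WidthBounded (t' t : TStructure C) : Prop :=
  ∃ m n : ℤ, (∀ X : C, t.le m X → t'.le 0 X) ∧ (∀ X : C, t'.le 0 X → t.le n X)

section Aux

open CategoryTheory.Triangulated.TStructure

lemma wb_zero_hom (t : TStructure C) {X Y : C} (f : X ⟶ Y) (n : ℤ)
    (hX : t.le n X) (hY : t.ge (n + 1) Y) : f = 0 := by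
  have hX' : t.le 0 (X⟦n⟧) := t.le_shift n n 0 (add_zero n) X hX
  have hY' : t.ge 1 (Y⟦n⟧) := t.ge_shift (n + 1) n 1 rfl Y hY
  have h := t.zero' ((shiftFunctor C n).map f) hX' hY'
  exact (shiftFunctor C n).map_eq_zero_iff.1 h

lemma wb_le_of_orth (t : TStructure C) (n : ℤ) (X : C)
    (h : ∀ Y : C, t.ge (n + 1) Y → ∀ f : X ⟶ Y, f = 0) : t.le n X := by
  obtain ⟨A, B, hA, hB, f, g, w, mem⟩ := t.exists_triangle X n (n + 1) rfl
  obtain ⟨r, hr⟩ := Pretriangulated.Triangle.yoneda_exact₂ _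
    (rot_of_distTriang _ mem) (𝟙 B) (by change g ≫ 𝟙 B = 0; rw [h B hB g, zero_comp])
  have hr0 : r = 0 :=
    wb_zero_hom t r n (t.le_monotone (by omega : n - 1 ≤ n) _
      (t.le_shift n 1 (n - 1) (by omega) A hA)) hB
  have hBz : IsZero B := by
    rw [IsZero.iff_id_eq_zero, hr, hr0, comp_zero]; rfl
  have : IsIso f := (Pretriangulated.Triangle.isZero₃_iff_isIso₁ _ mem).1 hBz
  exact (t.le n).prop_of_iso (asIso f) hA

lemma wb_ge_of_orth (t : TStructure C) (n : ℤ) (X : C)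
    (h : ∀ Y : C, t.le (n - 1) Y → ∀ f : Y ⟶ X, f = 0) : t.ge n X := by
  obtain ⟨A, B, hA, hB, f, g, w, mem⟩ := t.exists_triangle X (n - 1) n (by omega)
  obtain ⟨s, hs⟩ := Pretriangulated.Triangle.coyoneda_exact₂ _
    (inv_rot_of_distTriang _ mem) (𝟙 A) (by change 𝟙 A ≫ f = 0; rw [Category.id_comp]; exact h A hA f)
  have hs0 : s = 0 :=
    wb_zero_hom t s n (t.le_monotone (by omega : n - 1 ≤ n) _ hA)
      (t.ge_shift n (-1) (n + 1) (by omega) B hB)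
  have hAz : IsZero A := by
    rw [IsZero.iff_id_eq_zero, hs, hs0, zero_comp]; rfl
  have : IsIso g := (Pretriangulated.Triangle.isZero₁_iff_isIso₂ _ mem).1 hAz
  exact (t.ge n).prop_of_iso (asIso g).symm hB

lemma wb_le_ext (t : TStructure C) (T : Pretriangulated.Triangle C)
    (hT : T ∈ distTriang C) (n : ℤ)
    (h₁ : t.le n T.obj₁) (h₃ : t.le n T.obj₃) : t.le n T.obj₂ := by
  apply wb_le_of_orth
  intro Y hY f
  obtain ⟨g, hg⟩ := Pretriangulated.Triangle.yoneda_exact₂ T hT f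
    (wb_zero_hom t (T.mor₁ ≫ f) n h₁ hY)
  rw [hg, wb_zero_hom t g n h₃ hY, comp_zero]

lemma wb_ge_ext (t : TStructure C) (T : Pretriangulated.Triangle C)
    (hT : T ∈ distTriang C) (n : ℤ)
    (h₁ : t.ge n T.obj₁) (h₃ : t.ge n T.obj₃) : t.ge n T.obj₂ := by
  apply wb_ge_of_orth
  intro Y hY f
  have h₃' : t.ge (n - 1 + 1) T.obj₃ := by rwa [sub_add_cancel]
  have h₁' : t.ge (n - 1 + 1) T.obj₁ := by rwa [sub_add_cancel]
  obtain ⟨g, hg⟩ := Pretriangulated.Triangle.coyoneda_exact₂ T hT f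
    (wb_zero_hom t (f ≫ T.mor₂) (n - 1) hY h₃')
  rw [hg, wb_zero_hom t g (n - 1) hY h₁', zero_comp]

lemma wb_le_zero (t : TStructure C) (n : ℤ) (X : C) (hX : IsZero X) : t.le n X :=
  wb_le_of_orth t n X fun _ _ f => hX.eq_of_src f 0

lemma wb_ge_zero (t : TStructure C) (n : ℤ) (X : C) (hX : IsZero X) : t.ge n X :=
  wb_ge_of_orth t n X fun _ _ f => hX.eq_of_tgt f 0

lemma wb_main (t₀ t' : TStructure C) (A B : ℤ)
    (hheart : ∀ X : C, t₀.le 0 X → t₀.ge 0 X → t'.le B X ∧ t'.ge A X) :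
    ∀ k : ℕ, ∀ a b : ℤ, b < a + k → ∀ X : C, t₀.ge a X → t₀.le b X →
      t'.le (B + b) X ∧ t'.ge (A + a) X := by
  intro k
  induction k with
  | zero =>
    intro a b hab X hGE hLE
    have hz : IsZero X := by
      rw [IsZero.iff_id_eq_zero]
      exact wb_zero_hom t₀ (𝟙 X) b hLE (t₀.ge_antitone (by omega : b + 1 ≤ a) X hGE)
    exact ⟨wb_le_zero t' _ _ hz, wb_ge_zero t' _ _ hz⟩
  | succ k ih =>
    intro a b hab X hGE hLE
    rcases lt_or_ge b a with h | h
    · have hz : IsZero X := by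
        rw [IsZero.iff_id_eq_zero]
        exact wb_zero_hom t₀ (𝟙 X) b hLE (t₀.ge_antitone (by omega : b + 1 ≤ a) X hGE)
      exact ⟨wb_le_zero t' _ _ hz, wb_ge_zero t' _ _ hz⟩
    · obtain ⟨A₁, B₁, hA₁, hB₁, f, g, w, mem⟩ := t₀.exists_triangle X a (a + 1) rfl
      have hA₁ge : t₀.ge a A₁ := by
        apply wb_ge_of_orth
        intro Y hY e
        have hGE' : t₀.ge (a - 1 + 1) X := by rwa [sub_add_cancel]
        obtain ⟨u, hu⟩ := Pretriangulated.Triangle.coyoneda_exact₂ _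
          (inv_rot_of_distTriang _ mem) e
          (by change e ≫ f = 0; exact wb_zero_hom t₀ (e ≫ f) (a - 1) hY hGE')
        have hu0 : u = 0 :=
          wb_zero_hom t₀ u (a + 1) (t₀.le_monotone (by omega : a - 1 ≤ a + 1) Y hY)
            (t₀.ge_shift (a + 1) (-1) (a + 1 + 1) (by omega) B₁ hB₁)
        rw [hu, hu0, zero_comp]; rfl
      have hB₁le : t₀.le b B₁ := by
        apply wb_le_of_orth
        intro Y hY e
        obtain ⟨u, hu⟩ := Pretriangulated.Triangle.yoneda_exact₂ _
          (rot_of_distTriang _ mem) e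
          (by change g ≫ e = 0; exact wb_zero_hom t₀ (g ≫ e) b hLE hY)
        have hu0 : u = 0 :=
          wb_zero_hom t₀ u b (t₀.le_monotone (by omega : a - 1 ≤ b) _
            (t₀.le_shift a 1 (a - 1) (by omega) A₁ hA₁)) hY
        rw [hu, hu0, comp_zero]; rfl
      have hH := hheart (A₁⟦a⟧) (t₀.le_shift a a 0 (by omega) A₁ hA₁)
        (t₀.ge_shift a a 0 (by omega) A₁ hA₁ge)
      have e₁ : (A₁⟦a⟧)⟦-a⟧ ≅ A₁ := ((shiftEquiv C a).unitIso.app A₁).symm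
      have hA₁le' : t'.le (B + a) A₁ :=
        (t'.le (B + a)).prop_of_iso e₁ (t'.le_shift B (-a) (B + a) (by omega) _ hH.1)
      have hA₁ge' : t'.ge (A + a) A₁ :=
        (t'.ge (A + a)).prop_of_iso e₁ (t'.ge_shift A (-a) (A + a) (by omega) _ hH.2)
      obtain ⟨hB₁L, hB₁G⟩ := ih (a + 1) b (by push_cast at hab ⊢; omega) B₁ hB₁ hB₁le
      constructor
      · exact wb_le_ext t' _ mem (B + b)
          (t'.le_monotone (by omega : B + a ≤ B + b) _ hA₁le') hB₁L
      · exact wb_ge_ext t' _ mem (A + a) hA₁ge'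
          (t'.ge_antitone (by omega : A + a ≤ A + (a + 1)) _ hB₁G)

lemma wb_bounds (t₀ : TStructure C) (ht₀ : TBounded t₀)
    (N : ℕ) (S : Fin N → C)
    (hgen : ∀ P : C → Prop,
      (∀ i, P (S i)) →
      (∀ X : C, IsZero X → P X) →
      (∀ X Y : C, (X ≅ Y) → P X → P Y) →
      (∀ T : Pretriangulated.Triangle C, (T ∈ distTriang C) →
        P T.obj₁ → P T.obj₃ → P T.obj₂) →
      ∀ X : C, HeartSet t₀ X → P X)
    (t' : TStructure C) (h' : TBounded t') :
    ∃ A B : ℤ, (∀ (b : ℤ) (X : C), t₀.le b X → t'.le (B + b) X) ∧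
      (∀ (a : ℤ) (X : C), t₀.ge a X → t'.ge (A + a) X) := by
  choose m n hm hn using fun i => h' (S i)
  obtain ⟨A, hA⟩ := (Set.finite_range m).bddBelow
  obtain ⟨B, hB⟩ := (Set.finite_range n).bddAbove
  have hheart : ∀ X : C, HeartSet t₀ X → (t'.le B X ∧ t'.ge A X) := by
    refine hgen _ ?_ ?_ ?_ ?_
    · intro i
      exact ⟨t'.le_monotone (hB (Set.mem_range_self i)) _ (hn i),
        t'.ge_antitone (hA (Set.mem_range_self i)) _ (hm i)⟩
    · intro X hX
      exact ⟨wb_le_zero t' _ _ hX, wb_ge_zero t' _ _ hX⟩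
    · intro X Y e hX
      exact ⟨ObjectProperty.prop_of_iso _ e hX.1, ObjectProperty.prop_of_iso _ e hX.2⟩
    · intro T hT hh₁ hh₃
      exact ⟨wb_le_ext t' T hT _ hh₁.1 hh₃.1, wb_ge_ext t' T hT _ hh₁.2 hh₃.2⟩
  have hheart' : ∀ X : C, t₀.le 0 X → t₀.ge 0 X → t'.le B X ∧ t'.ge A X :=
    fun X h1 h2 => hheart X ⟨h1, h2⟩
  refine ⟨A, B, ?_, ?_⟩
  · intro b X hX
    obtain ⟨a, n₀, hGE, _⟩ := ht₀ X
    exact (wb_main t₀ t' A B hheart' ((b - a + 1).toNat) a b (by omega) X hGE hX).1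
  · intro a X hX
    obtain ⟨m₀, b, _, hLE⟩ := ht₀ X
    have := (wb_main t₀ t' A B hheart' ((b - a + 1).toNat) a b (by omega) X hX hLE).2
    exact this

end Aux

/-- If `D` admits a bounded t-structure `t₀` whose heart is a length category with finitely
many isomorphism classes of simple objects (expressed by the fact that every heart object lies
in the smallest class containing the finitely many simple objects `S i`, the zero objects, and
closed under isomorphism and extension), then any two bounded t-structures on `D` are
width-bounded with respect to each other. -/
theorem widthBounded_of_length_heart_finitely_many_simples
    (t₀ : TStructure C) (ht₀ : TBounded t₀)
    (N : ℕ) (S : Fin N → C) (hS : ∀ i, HeartSet t₀ (S i))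
    (hgen : ∀ P : C → Prop,
      (∀ i, P (S i)) →
      (∀ X : C, IsZero X → P X) →
      (∀ X Y : C, (X ≅ Y) → P X → P Y) →
      (∀ T : Triangle C, (T ∈ distTriang C) → P T.obj₁ → P T.obj₃ → P T.obj₂) →
      ∀ X : C, HeartSet t₀ X → P X)
    (t₁ t₂ : TStructure C) (h₁ : TBounded t₁) (h₂ : TBounded t₂) :
    WidthBounded t₁ t₂ := by
  obtain ⟨A₁, B₁, k₁L, k₁G⟩ := wb_bounds t₀ ht₀ N S hgen t₁ h₁
  obtain ⟨A₂, B₂, k₂L, k₂G⟩ := wb_bounds t₀ ht₀ N S hgen t₂ h₂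
  have conv : ∀ (t' : TStructure C) (A' : ℤ),
      (∀ (a : ℤ) (Y : C), t₀.ge a Y → t'.ge (A' + a) Y) →
      ∀ (m : ℤ) (X : C), t'.le m X → t₀.le (m - A') X := by
    intro t' A' key m X hX
    apply wb_le_of_orth
    intro Y hY f
    have h1 : t'.ge (A' + (m - A' + 1)) Y := key _ Y hY
    have e : A' + (m - A' + 1) = m + 1 := by ring
    rw [e] at h1
    exact wb_zero_hom t' f m hX h1
  refine ⟨A₂ - B₁, B₂ - A₁, ?_, ?_⟩
  · intro X hX
    have h0 : t₀.le (A₂ - B₁ - A₂) X := conv t₂ A₂ k₂G _ X hX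
    have h1 := k₁L _ X h0
    have e : B₁ + (A₂ - B₁ - A₂) = 0 := by ring
    rwa [e] at h1
  · intro X hX
    have h0 : t₀.le (0 - A₁) X := conv t₁ A₁ k₁G _ X hX
    have h1 := k₂L _ X h0
    have e : B₂ + (0 - A₁) = B₂ - A₁ := by ring
    rwa [e] at h1
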